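/- arXiv:1701.05578 — 2 statements merged into one kernel-verified Lean document; each statement's English description precedes it below -/
import Mathlib

section
/- For every integer n > 2, every ν ≥ 0 and every x ≥ 0, |T_n(s; x) − x| ≤ (2/(n−2)) x + 2ν/(n−2), where T_n(s; x) denotes the Dunkl–Szász–Beta operator applied to the identity function g(s) = s. -/
open MeasureTheory Filter

/-- Dunkl coefficients: `γ_ν(2r) = 2^(2r) r! Γ(r+ν+1/2)/Γ(ν+1/2)`,
`γ_ν(2r+1) = 2^(2r+1) r! Γ(r+ν+3/2)/Γ(ν+1/2)`. -/
noncomputable def dGamma (ν : ℝ) (r : ℕ) : ℝ :=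
  if r % 2 = 0 then
    2 ^ r * (Nat.factorial (r / 2)) * Real.Gamma ((r / 2 : ℕ) + ν + 1 / 2) / Real.Gamma (ν + 1 / 2)
  else
    2 ^ r * (Nat.factorial (r / 2)) * Real.Gamma ((r / 2 : ℕ) + ν + 3 / 2) / Real.Gamma (ν + 1 / 2)

/-- Dunkl exponential `: e_ν(x) = Σ_{r=0}^∞ x^r/γ_ν(r)`. -/
noncomputable def eDunkl (ν x : ℝ) : ℝ := ∑' r : ℕ, x ^ r / dGamma ν r

/-- Dunkl–Szász–Beta operator
`T_n(g;x) = ((n−1)/e_ν(nx)) Σ_{r=1}^∞ C(n+r−2,r−1)(nx)^r/γ_ν(r) ∫_0^∞ s^{r−1}(1+s)^{−(n+r−1)} g(s) ds + g(0)/e_ν(nx)`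
(the sum over `r ≥ 1` is written via the index shift `r = k+1`). -/
noncomputable def Tn (ν : ℝ) (n : ℕ) (g : ℝ → ℝ) (x : ℝ) : ℝ :=
  ((n : ℝ) - 1) / eDunkl ν (n * x) *
      ∑' k : ℕ, (Nat.choose (n + k - 1) k : ℝ) * (n * x) ^ (k + 1) / dGamma ν (k + 1) *
        ∫ s in Set.Ioi (0 : ℝ), s ^ k / (1 + s) ^ (n + k) * g s
    + g 0 / eDunkl ν (n * x)

open Set

section
variable {ν : ℝ} {y : ℝ}

lemma Gamma_half_pos {ν : ℝ} (hν : 0 ≤ ν) : 0 < Real.Gamma (ν + 1/2) :=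
  Real.Gamma_pos_of_pos (by linarith)

lemma dGamma_even (ν : ℝ) (m : ℕ) : dGamma ν (2*m) =
    2 ^ (2*m) * (Nat.factorial m) * Real.Gamma ((m:ℝ) + ν + 1/2) / Real.Gamma (ν + 1/2) := by
  rw [dGamma, if_pos (by omega), show (2*m)/2 = m by omega]

lemma dGamma_odd (ν : ℝ) (m : ℕ) : dGamma ν (2*m+1) =
    2 ^ (2*m+1) * (Nat.factorial m) * Real.Gamma ((m:ℝ) + ν + 3/2) / Real.Gamma (ν + 1/2) := by
  rw [dGamma, if_neg (by omega), show (2*m+1)/2 = m by omega]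

lemma dGamma_zero {ν : ℝ} (hν : 0 ≤ ν) : dGamma ν 0 = 1 := by
  have := dGamma_even ν 0
  simp at this
  rw [this, div_self (Real.Gamma_pos_of_pos (by linarith : (0:ℝ) < ν + 2⁻¹)).ne']

lemma dGamma_pos {ν : ℝ} (hν : 0 ≤ ν) (r : ℕ) : 0 < dGamma ν r := by
  have h1 : (0:ℝ) < Real.Gamma (ν + 1/2) := Gamma_half_pos hν
  have h2 : (0:ℝ) < Real.Gamma ((r/2 : ℕ) + ν + 1/2) := Real.Gamma_pos_of_pos (by positivity)
  have h3 : (0:ℝ) < Real.Gamma ((r/2 : ℕ) + ν + 3/2) := Real.Gamma_pos_of_pos (by positivity)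
  have h4 : (0:ℝ) < (Nat.factorial (r/2) : ℝ) := by positivity
  unfold dGamma
  split <;> positivity

/-- the factor `θ_r`: `2ν` for odd `r`, `0` for even. -/
noncomputable def theta (ν : ℝ) (r : ℕ) : ℝ := if r % 2 = 1 then 2 * ν else 0

lemma theta_nonneg {ν : ℝ} (hν : 0 ≤ ν) (r : ℕ) : 0 ≤ theta ν r := by
  unfold theta; split <;> linarith

lemma theta_le {ν : ℝ} (hν : 0 ≤ ν) (r : ℕ) : theta ν r ≤ 2 * ν := by
  unfold theta; split <;> linarith

lemma dGamma_succ {ν : ℝ} (hν : 0 ≤ ν) (r : ℕ) :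
    dGamma ν (r + 1) = ((r : ℝ) + 1 + theta ν (r+1)) * dGamma ν r := by
  rcases Nat.even_or_odd r with ⟨m, hm⟩ | ⟨m, hm⟩
  · have hr : r = 2*m := by omega
    subst hr
    rw [dGamma_odd, dGamma_even, theta, if_pos (by omega)]
    have hG : Real.Gamma ((m:ℝ) + ν + 3/2) = ((m:ℝ) + ν + 1/2) * Real.Gamma ((m:ℝ) + ν + 1/2) := by
      have := Real.Gamma_add_one (s := (m:ℝ) + ν + 1/2) (by positivity)
      rw [show (m:ℝ) + ν + 3/2 = (m:ℝ) + ν + 1/2 + 1 by ring, this]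
    rw [hG]
    push_cast
    ring
  · subst hm
    rw [show 2*m+1+1 = 2*(m+1) by ring, dGamma_even, dGamma_odd, theta, if_neg (by omega)]
    rw [Nat.factorial_succ, show ((m:ℕ)+1 : ℕ) = m+1 from rfl]
    have : ((m+1 : ℕ) : ℝ) + ν + 1/2 = (m:ℝ) + ν + 3/2 := by push_cast; ring
    rw [this]
    push_cast
    ring


lemma factorial_le_dGamma (hν : 0 ≤ ν) (r : ℕ) : (Nat.factorial r : ℝ) ≤ dGamma ν r := by
  induction r with
  | zero => simp [dGamma_zero hν]
  | succ k ih =>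
      rw [dGamma_succ hν, Nat.factorial_succ]
      push_cast
      have h1 : (0:ℝ) ≤ theta ν (k+1) := theta_nonneg hν _
      have h2 : (0:ℝ) < (k:ℝ) + 1 := by positivity
      have h3 : (0:ℝ) ≤ (Nat.factorial k : ℝ) := by positivity
      nlinarith [dGamma_pos hν k]

lemma summable_aDunkl (hν : 0 ≤ ν) {y : ℝ} (hy : 0 ≤ y) :
    Summable (fun r : ℕ => y ^ r / dGamma ν r) := by
  apply Summable.of_nonneg_of_le
    (fun r => div_nonneg (by positivity) (dGamma_pos hν r).le)
    (fun r => div_le_div_of_nonneg_left (by positivity)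
      (by positivity) (factorial_le_dGamma hν r))
    (Real.summable_pow_div_factorial y)
end

section
variable {ν : ℝ} {y : ℝ}

lemma summable_shift (hν : 0 ≤ ν) (hy : 0 ≤ y) :
    Summable (fun k : ℕ => y ^ (k+1) / dGamma ν (k+1)) :=
  (summable_nat_add_iff (f := fun r : ℕ => y ^ r / dGamma ν r) 1).mpr
    (summable_aDunkl hν hy)

lemma summable_theta (hν : 0 ≤ ν) (hy : 0 ≤ y) :
    Summable (fun k : ℕ => theta ν (k+1) * (y ^ (k+1) / dGamma ν (k+1))) := by
  apply Summable.of_nonneg_of_le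
    (fun k => mul_nonneg (theta_nonneg hν _)
      (div_nonneg (by positivity) (dGamma_pos hν _).le))
    (fun k => mul_le_mul_of_nonneg_right (theta_le hν _)
      (div_nonneg (by positivity) (dGamma_pos hν _).le))
    ((summable_shift hν hy).mul_left (2*ν))

lemma key_pointwise (hν : 0 ≤ ν) (k : ℕ) :
    ((k:ℝ)+1) * (y ^ (k+1) / dGamma ν (k+1)) =
      y * (y ^ k / dGamma ν k) - theta ν (k+1) * (y ^ (k+1) / dGamma ν (k+1)) := by
  rw [dGamma_succ hν k]
  have h1 : (0:ℝ) < (k:ℝ) + 1 + theta ν (k+1) := by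
    have := theta_nonneg hν (k+1); positivity
  have h2 : dGamma ν k ≠ 0 := (dGamma_pos hν k).ne'
  field_simp
  ring

lemma summable_key (hν : 0 ≤ ν) (hy : 0 ≤ y) :
    Summable (fun k : ℕ => ((k:ℝ)+1) * (y ^ (k+1) / dGamma ν (k+1))) := by
  have := ((summable_aDunkl hν hy).mul_left y).sub (summable_theta hν hy)
  exact this.congr (fun k => (key_pointwise hν k).symm)

lemma tsum_key (hν : 0 ≤ ν) (hy : 0 ≤ y) :
    ∑' k : ℕ, ((k:ℝ)+1) * (y ^ (k+1) / dGamma ν (k+1)) =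
      y * (∑' r : ℕ, y ^ r / dGamma ν r)
        - ∑' k : ℕ, theta ν (k+1) * (y ^ (k+1) / dGamma ν (k+1)) := by
  rw [tsum_congr (fun k => key_pointwise hν (y := y) k),
    Summable.tsum_sub ((summable_aDunkl hν hy).mul_left y) (summable_theta hν hy),
    tsum_mul_left]

lemma one_le_eDunkl_aux (hν : 0 ≤ ν) (hy : 0 ≤ y) :
    1 ≤ ∑' r : ℕ, y ^ r / dGamma ν r := by
  have h0 : y ^ 0 / dGamma ν 0 = 1 := by simp [dGamma_zero hν]
  calc (1:ℝ) = y ^ 0 / dGamma ν 0 := h0.symm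
    _ ≤ ∑' r : ℕ, y ^ r / dGamma ν r :=
        Summable.le_tsum (summable_aDunkl hν hy) 0
          (fun j _ => div_nonneg (by positivity) (dGamma_pos hν j).le)

lemma S_nonneg (hν : 0 ≤ ν) (hy : 0 ≤ y) :
    0 ≤ ∑' k : ℕ, theta ν (k+1) * (y ^ (k+1) / dGamma ν (k+1)) :=
  tsum_nonneg (fun k => mul_nonneg (theta_nonneg hν _)
    (div_nonneg (by positivity) (dGamma_pos hν _).le))

lemma S_le (hν : 0 ≤ ν) (hy : 0 ≤ y) :
    (∑' k : ℕ, theta ν (k+1) * (y ^ (k+1) / dGamma ν (k+1)))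
      ≤ 2 * ν * (∑' r : ℕ, y ^ r / dGamma ν r) := by
  have h1 : (∑' k : ℕ, theta ν (k+1) * (y ^ (k+1) / dGamma ν (k+1)))
      ≤ ∑' k : ℕ, 2 * ν * (y ^ (k+1) / dGamma ν (k+1)) := by
    apply Summable.tsum_le_tsum _ (summable_theta hν hy) ((summable_shift hν hy).mul_left (2*ν))
    exact fun k => mul_le_mul_of_nonneg_right (theta_le hν _)
      (div_nonneg (by positivity) (dGamma_pos hν _).le)
  rw [tsum_mul_left] at h1
  refine h1.trans (mul_le_mul_of_nonneg_left ?_ (by linarith))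
  have := Summable.tsum_eq_zero_add (summable_aDunkl hν hy (y := y))
  rw [this]
  have h0 : (0:ℝ) ≤ y ^ 0 / dGamma ν 0 := div_nonneg (by positivity) (dGamma_pos hν 0).le
  linarith
end


lemma integrableOn_pow_div (a m : ℕ) (h : a + 2 ≤ m) :
    IntegrableOn (fun s : ℝ => s ^ a / (1+s) ^ m) (Ioi (0:ℝ)) := by
  have hcont : ContinuousOn (fun s : ℝ => s ^ a / (1+s) ^ m) (Icc 0 1) := by
    apply ContinuousOn.div (by fun_prop) (by fun_prop)
    intro s hs
    have : (0:ℝ) < 1 + s := by have := hs.1; linarith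
    positivity
  have h1 : IntegrableOn (fun s : ℝ => s ^ a / (1+s) ^ m) (Ioc 0 1) :=
    (hcont.integrableOn_Icc).mono_set Ioc_subset_Icc_self
  have h2 : IntegrableOn (fun s : ℝ => s ^ a / (1+s) ^ m) (Ioi 1) := by
    have hint : IntegrableOn (fun s : ℝ => s ^ ((a:ℝ) - m)) (Ioi 1) :=
      integrableOn_Ioi_rpow_of_lt (by have h' := (Nat.cast_le (α := ℝ)).mpr h; push_cast at h'; linarith) one_pos
    apply Integrable.mono hint
    · apply ContinuousOn.aestronglyMeasurable _ measurableSet_Ioi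
      apply ContinuousOn.div (by fun_prop) (by fun_prop)
      intro s hs
      have : (1:ℝ) < s := hs
      positivity
    · filter_upwards [ae_restrict_mem measurableSet_Ioi] with s hs
      have hs1 : (1:ℝ) < s := hs
      have hs0 : (0:ℝ) < s := by linarith
      have hb : (0:ℝ) < 1 + s := by linarith
      rw [Real.norm_eq_abs, Real.norm_eq_abs, abs_of_nonneg (by positivity),
        abs_of_nonneg (by positivity)]
      rw [Real.rpow_sub hs0, Real.rpow_natCast, Real.rpow_natCast]
      apply div_le_div₀ (by positivity) le_rfl (by positivity)
      exact pow_le_pow_left₀ hs0.le (by linarith) m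
  have := h1.union h2
  rwa [Ioc_union_Ioi_eq_Ioi (by norm_num : (0:ℝ) ≤ 1)] at this

lemma hasDerivAt_v (m : ℕ) (hm : 2 ≤ m) {s : ℝ} (hs : -1 < s) :
    HasDerivAt (fun t : ℝ => -(((m:ℝ)-1)⁻¹ * ((1+t)^(m-1))⁻¹)) (1/(1+s)^m) s := by
  have h0 : (0:ℝ) < 1 + s := by linarith
  have hp : HasDerivAt (fun t : ℝ => (1+t)^(m-1)) (((m-1 : ℕ):ℝ) * (1+s)^(m-1-1) * 1) s :=
    ((hasDerivAt_id s).const_add 1).pow (m-1)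
  have hinv := hp.inv (by positivity)
  have := (hinv.const_mul (((m:ℝ)-1)⁻¹)).neg
  refine this.congr_deriv ?_
  symm
  have hc : ((m-1 : ℕ):ℝ) = (m:ℝ) - 1 := by
    push_cast [Nat.cast_sub (by omega : 1 ≤ m)]; ring
  rw [hc]
  have hm1 : (0:ℝ) < (m:ℝ) - 1 := by
    have : (2:ℝ) ≤ (m:ℝ) := by exact_mod_cast hm
    linarith
  have hpow : ((1+s)^(m-1))^2 = (1+s)^(m-1-1) * (1+s)^m := by
    rw [← pow_mul, ← pow_add]; congr 1; omega
  field_simp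
  rw [hpow]; ring

lemma tendsto_inv_one_add_pow (k : ℕ) (hk : 1 ≤ k) :
    Tendsto (fun s : ℝ => ((1+s)^k)⁻¹) atTop (nhds 0) := by
  have h1 : Tendsto (fun s : ℝ => (1+s)^k) atTop atTop :=
    (tendsto_pow_atTop (by omega)).comp (tendsto_atTop_add_const_left atTop 1 tendsto_id)
  exact h1.inv_tendsto_atTop

lemma integral_base (m : ℕ) (hm : 2 ≤ m) :
    ∫ s in Ioi (0:ℝ), 1 / (1+s)^m = ((m:ℝ) - 1)⁻¹ := by
  have hderiv : ∀ s ∈ Ici (0:ℝ), HasDerivAt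
      (fun t : ℝ => -(((m:ℝ)-1)⁻¹ * ((1+t)^(m-1))⁻¹)) (1/(1+s)^m) s :=
    fun s hs => hasDerivAt_v m hm (by simp at hs; linarith)
  have hint : IntegrableOn (fun s : ℝ => 1 / (1+s)^m) (Ioi (0:ℝ)) := by
    have := integrableOn_pow_div 0 m (by omega)
    simpa using this
  have htend : Tendsto (fun t : ℝ => -(((m:ℝ)-1)⁻¹ * ((1+t)^(m-1))⁻¹)) atTop (nhds 0) := by
    have := (tendsto_inv_one_add_pow (m-1) (by omega)).const_mul (((m:ℝ)-1)⁻¹)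
    have h2 := this.neg
    simpa using h2
  rw [integral_Ioi_of_hasDerivAt_of_tendsto' hderiv hint htend]
  norm_num

lemma integral_pow_div : ∀ (a m : ℕ), a + 2 ≤ m →
    ∫ s in Ioi (0:ℝ), s ^ a / (1+s) ^ m =
      (Nat.factorial a : ℝ) * (Nat.factorial (m-a-2)) / (Nat.factorial (m-1)) := by
  intro a
  induction a with
  | zero =>
      intro m hm
      obtain ⟨q, rfl⟩ : ∃ q, m = q + 2 := ⟨m - 2, by omega⟩
      have : ∫ s in Ioi (0:ℝ), s ^ 0 / (1+s) ^ (q+2) =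
          ∫ s in Ioi (0:ℝ), 1 / (1+s) ^ (q+2) := by
        apply setIntegral_congr_fun measurableSet_Ioi
        intro s _; simp
      rw [this, integral_base (q+2) (by omega)]
      simp only [show q+2-0-2 = q by omega, show q+2-1 = q+1 by omega,
        Nat.factorial_zero, Nat.factorial_succ]
      push_cast
      rw [show ((q:ℝ)+2-1) = (q:ℝ)+1 by ring]
      field_simp
  | succ a ih =>
      intro m hm
      have hm1 : (0:ℝ) < (m:ℝ) - 1 := by
        have : ((a:ℝ)+1+2) ≤ (m:ℝ) := by exact_mod_cast hm
        linarith
      set u : ℝ → ℝ := fun s => s ^ (a+1) with hu_def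
      set u' : ℝ → ℝ := fun s => ((a:ℝ)+1) * s ^ a with hu'_def
      set v : ℝ → ℝ := fun t => -(((m:ℝ)-1)⁻¹ * ((1+t)^(m-1))⁻¹) with hv_def
      set v' : ℝ → ℝ := fun s => 1/(1+s)^m with hv'_def
      have hu : ∀ s ∈ Ioi (0:ℝ), HasDerivAt u (u' s) s := by
        intro s _
        have := hasDerivAt_pow (a+1) s
        simpa [hu_def, hu'_def] using this
      have hv : ∀ s ∈ Ioi (0:ℝ), HasDerivAt v (v' s) s :=
        fun s hs => hasDerivAt_v m (by omega) (by simp at hs; linarith)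
      have huv' : IntegrableOn (u * v') (Ioi (0:ℝ)) := by
        have h1 := integrableOn_pow_div (a+1) m hm
        apply h1.congr_fun _ measurableSet_Ioi
        intro s _; simp [hu_def, hv'_def]; ring
      have hu'v : IntegrableOn (u' * v) (Ioi (0:ℝ)) := by
        have h1 : IntegrableOn
            (fun s : ℝ => (-(((a:ℝ)+1) * (((m:ℝ)-1)⁻¹))) * (s ^ a / (1+s) ^ (m-1)))
            (Ioi (0:ℝ)) :=
          (integrableOn_pow_div a (m-1) (by omega)).const_mul _
        apply h1.congr_fun _ measurableSet_Ioi
        intro s _; simp only [hu'_def, hv_def, Pi.mul_apply]; ring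
      have h_zero : Tendsto (u * v) (nhdsWithin 0 (Ioi 0)) (nhds 0) := by
        have hc : ContinuousAt (fun s : ℝ => u s * v s) 0 := by
          apply ContinuousAt.mul
          · fun_prop
          · apply ContinuousAt.neg
            apply ContinuousAt.mul continuousAt_const
            apply ContinuousAt.inv₀ (by fun_prop)
            norm_num
        have h0 : u 0 * v 0 = 0 := by simp [hu_def]
        have h2 : Tendsto (u * v) (nhds 0) (nhds 0) := by
          have h3 := hc.tendsto
          rw [h0] at h3
          exact h3
        exact h2.mono_left nhdsWithin_le_nhds
      have h_infty : Tendsto (u * v) atTop (nhds 0) := by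
        have hg : Tendsto (fun s : ℝ => s^(a+1) * ((1+s)^(m-1))⁻¹) atTop (nhds 0) := by
          apply squeeze_zero' (g := fun s : ℝ => ((1+s)^(m-a-2))⁻¹)
          · filter_upwards [eventually_ge_atTop (0:ℝ)] with s hs
            positivity
          · filter_upwards [eventually_ge_atTop (0:ℝ)] with s hs
            have h0 : (0:ℝ) < 1 + s := by linarith
            have h1 : s^(a+1) ≤ (1+s)^(a+1) := pow_le_pow_left₀ hs (by linarith) _
            have h2 : (1+s)^(m-1) = (1+s)^(a+1) * (1+s)^(m-a-2) := by
              rw [← pow_add]; congr 1; omega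
            rw [h2, mul_inv, ← mul_assoc]
            calc s^(a+1) * ((1+s)^(a+1))⁻¹ * ((1+s)^(m-a-2))⁻¹
                ≤ (1+s)^(a+1) * ((1+s)^(a+1))⁻¹ * ((1+s)^(m-a-2))⁻¹ := by
                  apply mul_le_mul_of_nonneg_right (mul_le_mul_of_nonneg_right h1 (by positivity))
                  positivity
              _ = ((1+s)^(m-a-2))⁻¹ := by field_simp
          · exact tendsto_inv_one_add_pow (m-a-2) (by omega)
        have := (hg.const_mul (((m:ℝ)-1)⁻¹)).neg
        have heq : (u * v) = fun s => -(((m:ℝ)-1)⁻¹ * (s^(a+1) * ((1+s)^(m-1))⁻¹)) := by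
          funext s; simp only [hu_def, hv_def, Pi.mul_apply]; ring
        rw [heq]
        simpa using this
      have hparts := integral_Ioi_mul_deriv_eq_deriv_mul hu hv huv' hu'v h_zero h_infty
      have hLHS : ∫ s in Ioi (0:ℝ), s ^ (a+1) / (1+s) ^ m = ∫ s in Ioi (0:ℝ), u s * v' s := by
        apply setIntegral_congr_fun measurableSet_Ioi
        intro s _; simp [hu_def, hv'_def]; ring
      have hRHS : ∫ s in Ioi (0:ℝ), u' s * v s =
          (-(((a:ℝ)+1) * (((m:ℝ)-1)⁻¹))) * ∫ s in Ioi (0:ℝ), s ^ a / (1+s) ^ (m-1) := by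
        rw [← integral_const_mul]
        apply setIntegral_congr_fun measurableSet_Ioi
        intro s _; simp only [hu'_def, hv_def]; ring
      rw [hLHS, hparts, hRHS, ih (m-1) (by omega)]
      have e1 : m-1-a-2 = m-a-3 := by omega
      have e2 : m-(a+1)-2 = m-a-3 := by omega
      have e3 : m-1-1 = m-2 := by omega
      have e4 : m-1 = (m-2)+1 := by omega
      rw [e1, e3, e2, e4, Nat.factorial_succ (m-2), Nat.factorial_succ a]
      have e5 : ((m-2 : ℕ) : ℝ) = (m:ℝ) - 2 := by
        push_cast [Nat.cast_sub (by omega : (2:ℕ) ≤ m)]; ring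
      have hfac2 : (0:ℝ) < (Nat.factorial (m-2) : ℝ) := by positivity
      have hfac3 : (0:ℝ) < (Nat.factorial (m-a-3) : ℝ) := by positivity
      push_cast [e5]
      rw [show (m:ℝ) - 2 + 1 = (m:ℝ) - 1 by ring]
      have h7 : ((m:ℝ)-1) ≠ 0 := hm1.ne'
      have h8 : (Nat.factorial (m-2) : ℝ) ≠ 0 := hfac2.ne'
      field_simp [h7, h8]
      ring


lemma scalar_identity (p k : ℕ) :
    (Nat.choose (p+k+2) k : ℝ) *
      ((Nat.factorial (k+1) : ℝ) * (Nat.factorial p) / (Nat.factorial (p+k+2))) =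
    ((((p:ℝ)+3)-1) * (((p:ℝ)+3)-2))⁻¹ * ((k:ℝ)+1) := by
  have key := Nat.choose_mul_factorial_mul_factorial (show k ≤ p+k+2 by omega)
  rw [show p+k+2-k = p+2 by omega] at key
  have key' : (Nat.choose (p+k+2) k : ℝ) * (Nat.factorial k) * (Nat.factorial (p+2))
      = Nat.factorial (p+k+2) := by exact_mod_cast key
  have f1 : (Nat.factorial (k+1) : ℝ) = ((k:ℝ)+1) * (Nat.factorial k) := by
    rw [Nat.factorial_succ]; push_cast; ring
  have f2 : (Nat.factorial (p+2) : ℝ) = ((p:ℝ)+2) * (((p:ℝ)+1) * (Nat.factorial p)) := by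
    rw [show p+2 = p+1+1 by ring, Nat.factorial_succ, Nat.factorial_succ]; push_cast; ring
  rw [f2] at key'
  have h1 : (0:ℝ) < (Nat.factorial (p+k+2) : ℝ) := by positivity
  have h2 : (0:ℝ) < (p:ℝ)+2 := by positivity
  have h3 : (0:ℝ) < (p:ℝ)+1 := by positivity
  rw [f1, show (((p:ℝ)+3)-1) = (p:ℝ)+2 by ring, show (((p:ℝ)+3)-2) = (p:ℝ)+1 by ring]
  field_simp
  linear_combination key'

theorem stmt1 (ν : ℝ) (hν : 0 ≤ ν) (n : ℕ) (hn : 2 < n) (x : ℝ) (hx : 0 ≤ x) :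
    |Tn ν n (fun s => s) x - x| ≤ 2 / ((n : ℝ) - 2) * x + 2 * ν / ((n : ℝ) - 2) := by
  have hy : (0:ℝ) ≤ (n:ℝ) * x := by positivity
  set y : ℝ := (n:ℝ) * x with hy_def
  set E : ℝ := eDunkl ν y with hE_def
  have hEt : E = ∑' r : ℕ, y ^ r / dGamma ν r := rfl
  have hE1 : 1 ≤ E := by rw [hEt]; exact one_le_eDunkl_aux hν hy
  have hE0 : (0:ℝ) < E := lt_of_lt_of_le one_pos hE1
  set S : ℝ := ∑' k : ℕ, theta ν (k+1) * (y ^ (k+1) / dGamma ν (k+1)) with hS_def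
  have hS0 : 0 ≤ S := S_nonneg hν hy
  have hS2 : S ≤ 2 * ν * E := by rw [hEt]; exact S_le hν hy
  have hn2 : (0:ℝ) < (n:ℝ) - 2 := by
    have : (2:ℝ) < (n:ℝ) := by exact_mod_cast hn
    linarith
  have hn1 : (0:ℝ) < (n:ℝ) - 1 := by linarith
  -- evaluate each term of the series
  have hterm : ∀ k : ℕ, (Nat.choose (n + k - 1) k : ℝ) * y ^ (k + 1) / dGamma ν (k + 1) *
      (∫ s in Ioi (0:ℝ), s ^ k / (1 + s) ^ (n + k) * s + 0 / E) =
      ((((n:ℝ)-1) * ((n:ℝ)-2))⁻¹) * (((k:ℝ)+1) * (y ^ (k+1) / dGamma ν (k+1))) := by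
    intro k
    have hint : (∫ s in Ioi (0:ℝ), s ^ k / (1 + s) ^ (n + k) * s + 0 / E)
        = ∫ s in Ioi (0:ℝ), s ^ (k+1) / (1 + s) ^ (n + k) := by
      apply setIntegral_congr_fun measurableSet_Ioi
      intro s _
      beta_reduce
      rw [zero_div, add_zero]
      ring
    rw [hint, integral_pow_div (k+1) (n+k) (by omega)]
    obtain ⟨p, rfl⟩ : ∃ p, n = p + 3 := ⟨n-3, by omega⟩
    rw [show p+3+k-1 = p+k+2 by omega, show p+3+k-(k+1)-2 = p by omega]
    have hsc := scalar_identity p k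
    have hre : (Nat.choose (p+k+2) k : ℝ) * y ^ (k + 1) / dGamma ν (k + 1) *
        ((Nat.factorial (k+1) : ℝ) * (Nat.factorial p) / (Nat.factorial (p+k+2)))
        = ((Nat.choose (p+k+2) k : ℝ) *
            ((Nat.factorial (k+1) : ℝ) * (Nat.factorial p) / (Nat.factorial (p+k+2))))
          * (y ^ (k+1) / dGamma ν (k+1)) := by ring
    rw [hre, hsc]
    push_cast
    ring
  -- compute Tn
  have hTn : Tn ν n (fun s => s) x = (y * E - S) / (((n:ℝ)-2) * E) := by
    have hkey : (∑' k : ℕ, ((k:ℝ)+1) * (y ^ (k+1) / dGamma ν (k+1)))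
        = y * E - S := by
      rw [hEt, hS_def]; exact tsum_key hν hy
    have hsum : (∑' k : ℕ, (Nat.choose (n + k - 1) k : ℝ) * y ^ (k + 1) / dGamma ν (k + 1) *
        ∫ s in Ioi (0:ℝ), s ^ k / (1 + s) ^ (n + k) * s + 0 / E)
        = ((((n:ℝ)-1) * ((n:ℝ)-2))⁻¹) * (y * E - S) := by
      rw [tsum_congr hterm, tsum_mul_left, hkey]
    rw [Tn, ← hy_def, ← hE_def]
    rw [hsum]
    field_simp
  rw [hTn]
  have hsplit : (y * E - S) / (((n:ℝ)-2) * E) - x = (2*x*E - S) / (((n:ℝ)-2) * E) := by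
    rw [hy_def]
    field_simp
    ring
  rw [hsplit, abs_div, abs_of_pos (by positivity : (0:ℝ) < ((n:ℝ)-2) * E)]
  have habs : |2*x*E - S| ≤ (2*x + 2*ν) * E := by
    rw [abs_le]
    constructor
    · nlinarith
    · nlinarith
  calc |2*x*E - S| / (((n:ℝ)-2) * E) ≤ ((2*x + 2*ν) * E) / (((n:ℝ)-2) * E) := by
        apply div_le_div_of_nonneg_right habs (by positivity)
      _ = 2 / ((n : ℝ) - 2) * x + 2 * ν / ((n : ℝ) - 2) := by
        field_simp
end

section
/- For every integer n > 3, every ν ≥ 0 and every x ≥ 0, the Dunkl–Szász–Beta operator applied to g(s) = s² satisfies T_n(s²; x) = (1/(n²−5n+6)) · (1/e_ν(nx)) Σ_{r=1}^∞ r(r+1) (nx)^r/γ_ν(r). -/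
open MeasureTheory Filter

open MeasureTheory Filter Set

lemma tendsto_zero_aux (a c : ℕ) :
    Tendsto (fun s : ℝ => s ^ a / (1 + s) ^ (a + c + 1)) atTop (nhds 0) := by
  have h1 : Tendsto (fun s : ℝ => ((1 + s) ^ (c + 1))⁻¹) atTop (nhds 0) := by
    apply Tendsto.inv_tendsto_atTop
    exact (tendsto_pow_atTop (by omega)).comp (tendsto_atTop_add_const_left _ 1 tendsto_id)
  apply tendsto_of_tendsto_of_tendsto_of_le_of_le' (g := fun _ => (0:ℝ)) tendsto_const_nhds h1
  all_goals filter_upwards [eventually_ge_atTop (0:ℝ)] with s hs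
  · positivity
  · have hpos : (0:ℝ) < 1 + s := by linarith
    have key : s ^ a / (1 + s) ^ (a + c + 1)
        = (s / (1 + s)) ^ a * ((1 + s) ^ (c + 1))⁻¹ := by
      rw [show a + c + 1 = a + (c + 1) by ring, pow_add, div_mul_eq_div_div, ← div_pow,
        div_eq_mul_inv]
    rw [key]
    have h2 : (s / (1 + s)) ^ a ≤ 1 :=
      pow_le_one₀ (by positivity) (by rw [div_le_one hpos]; linarith)
    calc (s / (1 + s)) ^ a * ((1 + s) ^ (c + 1))⁻¹
        ≤ 1 * ((1 + s) ^ (c + 1))⁻¹ := mul_le_mul_of_nonneg_right h2 (by positivity)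
      _ = ((1 + s) ^ (c + 1))⁻¹ := one_mul _

lemma integrable_aux (a m : ℕ) (h : a + 2 ≤ m) :
    IntegrableOn (fun s : ℝ => s ^ a / (1 + s) ^ m) (Ioi 0) := by
  have hcont : ContinuousOn (fun s : ℝ => s ^ a / (1 + s) ^ m) (Ici 0) := by
    apply ContinuousOn.div (by fun_prop) (by fun_prop)
    intro s hs
    have : (0:ℝ) < 1 + s := by simp at hs; linarith
    positivity
  rw [← Ioc_union_Ioi_eq_Ioi (zero_le_one (α := ℝ))]
  apply IntegrableOn.union
  · exact ((hcont.mono Icc_subset_Ici_self).integrableOn_Icc).mono_set Ioc_subset_Icc_self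
  · have hg := integrableOn_Ioi_rpow_of_lt (a := (a:ℝ) - m)
      (by have h' : (a:ℝ) + 2 ≤ m := by exact_mod_cast h
          linarith) (c := 1) one_pos
    apply Integrable.mono hg ((hcont.mono (fun y hy => le_of_lt (by simpa using lt_trans one_pos (mem_Ioi.mp hy))
      : Ioi (1:ℝ) ⊆ Ici 0)).aestronglyMeasurable measurableSet_Ioi)
    rw [ae_restrict_iff' measurableSet_Ioi]
    filter_upwards with s hs
    simp only [mem_Ioi] at hs
    have hs0 : (0:ℝ) < s := lt_trans one_pos hs
    have h1s : (0:ℝ) < 1 + s := by linarith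
    rw [Real.norm_eq_abs, Real.norm_eq_abs, abs_of_nonneg (by positivity),
      abs_of_nonneg (Real.rpow_nonneg hs0.le _)]
    rw [Real.rpow_sub hs0, Real.rpow_natCast, Real.rpow_natCast]
    apply div_le_div_of_nonneg_left (by positivity) (by positivity)
    exact pow_le_pow_left₀ hs0.le (by linarith) m

lemma integral_closed (b : ℕ) : ∀ a : ℕ,
    ∫ s in Ioi (0:ℝ), s ^ a / (1 + s) ^ (a + b + 2)
      = (a.factorial * b.factorial : ℝ) / (a + b + 1).factorial := by
  intro a
  induction a with
  | zero =>
    have hder : ∀ s ∈ Ioi (0:ℝ), HasDerivAt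
        (fun s : ℝ => -(((b:ℝ) + 1)⁻¹ * ((1 + s) ^ (b + 1))⁻¹))
        (s ^ 0 / (1 + s) ^ (0 + b + 2)) s := by
      intro s hs
      simp only [mem_Ioi] at hs
      have h1s : (0:ℝ) < 1 + s := by linarith
      have h0 : HasDerivAt (fun s : ℝ => (1 + s) ^ (b + 1))
          (((b:ℝ) + 1) * (1 + s) ^ b) s := by
        have := ((hasDerivAt_id s).const_add 1).pow (b + 1)
        simp at this; exact this
      have h1 := (h0.inv (by positivity)).const_mul (((b:ℝ) + 1)⁻¹)
      have := h1.neg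
      refine this.congr_deriv ?_
      have hb1 : ((b:ℝ) + 1) ≠ 0 := by positivity
      field_simp
      ring
    have hcont : ContinuousWithinAt
        (fun s : ℝ => -(((b:ℝ) + 1)⁻¹ * ((1 + s) ^ (b + 1))⁻¹)) (Ici 0) 0 := by
      apply ContinuousAt.continuousWithinAt
      have : (1 + (0:ℝ)) ^ (b + 1) ≠ 0 := by norm_num
      fun_prop (disch := assumption)
    have hint : IntegrableOn (fun s : ℝ => s ^ 0 / (1 + s) ^ (0 + b + 2)) (Ioi 0) :=
      integrable_aux 0 (0 + b + 2) (by omega)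
    have htend : Tendsto (fun s : ℝ => -(((b:ℝ) + 1)⁻¹ * ((1 + s) ^ (b + 1))⁻¹))
        atTop (nhds 0) := by
      rw [show (0:ℝ) = -(((b:ℝ)+1)⁻¹ * 0) by ring]
      apply Tendsto.neg
      apply Tendsto.const_mul
      apply Tendsto.inv_tendsto_atTop
      exact (tendsto_pow_atTop (by omega)).comp (tendsto_atTop_add_const_left _ 1 tendsto_id)
    rw [integral_Ioi_of_hasDerivAt_of_tendsto hcont hder hint htend]
    simp [Nat.factorial]
    field_simp
  | succ a ih =>
    have key : ∫ s in Ioi (0:ℝ),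
        (((a:ℝ) + 1) * (s ^ a / (1 + s) ^ (a + b + 2))
          - ((a:ℝ) + (b:ℝ) + 2) * (s ^ (a + 1) / (1 + s) ^ (a + 1 + b + 2))) = 0 := by
      have hder : ∀ s ∈ Ioi (0:ℝ), HasDerivAt
          (fun s : ℝ => s ^ (a + 1) * ((1 + s) ^ (a + b + 2))⁻¹)
          (((a:ℝ) + 1) * (s ^ a / (1 + s) ^ (a + b + 2))
            - ((a:ℝ) + (b:ℝ) + 2) * (s ^ (a + 1) / (1 + s) ^ (a + 1 + b + 2))) s := by
        intro s hs
        simp only [mem_Ioi] at hs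
        have h1s : (0:ℝ) < 1 + s := by linarith
        have h0 : HasDerivAt (fun s : ℝ => (1 + s) ^ (a + b + 2))
            (((a:ℝ) + (b:ℝ) + 2) * (1 + s) ^ (a + b + 1)) s := by
          have := ((hasDerivAt_id s).const_add 1).pow (a + b + 2)
          refine this.congr_deriv ?_
          simp only [id_eq, mul_one, show a + b + 2 - 1 = a + b + 1 by omega]
          push_cast
          ring
        have h1 := (hasDerivAt_pow (a + 1) s).mul (h0.inv (by positivity))
        refine h1.congr_deriv ?_
        simp only [show a + 1 - 1 = a by omega, Pi.inv_apply, Nat.cast_add, Nat.cast_one]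
        field_simp
        ring
      have hcont : ContinuousWithinAt
          (fun s : ℝ => s ^ (a + 1) * ((1 + s) ^ (a + b + 2))⁻¹) (Ici 0) 0 := by
        apply ContinuousAt.continuousWithinAt
        have : (1 + (0:ℝ)) ^ (a + b + 2) ≠ 0 := by norm_num
        fun_prop (disch := assumption)
      have hint : IntegrableOn (fun s : ℝ =>
          ((a:ℝ) + 1) * (s ^ a / (1 + s) ^ (a + b + 2))
            - ((a:ℝ) + (b:ℝ) + 2) * (s ^ (a + 1) / (1 + s) ^ (a + 1 + b + 2))) (Ioi 0) :=
        ((integrable_aux a (a + b + 2) (by omega)).const_mul _).sub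
          ((integrable_aux (a + 1) (a + 1 + b + 2) (by omega)).const_mul _)
      have htend : Tendsto (fun s : ℝ => s ^ (a + 1) * ((1 + s) ^ (a + b + 2))⁻¹)
          atTop (nhds 0) := by
        have := tendsto_zero_aux (a + 1) b
        apply this.congr
        intro s
        rw [div_eq_mul_inv]
        ring_nf
      rw [integral_Ioi_of_hasDerivAt_of_tendsto hcont hder hint htend]
      simp
    rw [integral_sub ((integrable_aux a (a + b + 2) (by omega)).const_mul _)
      ((integrable_aux (a + 1) (a + 1 + b + 2) (by omega)).const_mul _),
      integral_const_mul, integral_const_mul, ih, sub_eq_zero] at key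
    have hab : ((a:ℝ) + (b:ℝ) + 2) ≠ 0 := by positivity
    have heq : ∫ s in Ioi (0:ℝ), s ^ (a + 1) / (1 + s) ^ (a + 1 + b + 2)
        = ((a:ℝ) + 1) * ((a.factorial * b.factorial : ℝ) / (a + b + 1).factorial)
          / ((a:ℝ) + (b:ℝ) + 2) := by
      field_simp at key ⊢
      linarith [key]
    rw [heq]
    have h2 : ((a + 1) + b + 1).factorial = ((a:ℝ) + (b:ℝ) + 2) * (a + b + 1).factorial := by
      have : (a + 1) + b + 1 = (a + b + 1) + 1 := by omega
      rw [this, Nat.factorial_succ]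
      push_cast
      ring
    have h4 : ((a + 1).factorial : ℝ) = ((a:ℝ) + 1) * a.factorial := by
      rw [Nat.factorial_succ]; push_cast; ring
    rw [h2, h4]
    have hf1 : ((a + b + 1).factorial : ℝ) ≠ 0 := by
      exact_mod_cast (a + b + 1).factorial_ne_zero
    field_simp
theorem stmt18 (ν : ℝ) (hν : 0 ≤ ν) (n : ℕ) (hn : 3 < n) (x : ℝ) (hx : 0 ≤ x) :
    Tn ν n (fun s => s ^ 2) x =
      1 / ((n : ℝ) ^ 2 - 5 * n + 6) * (1 / eDunkl ν (n * x)) *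
        ∑' r : ℕ, ((r : ℝ) + 1) * ((r : ℝ) + 2) * (n * x) ^ (r + 1) / dGamma ν (r + 1) := by
  obtain ⟨m, rfl⟩ : ∃ m, n = m + 4 := ⟨n - 4, by omega⟩
  rw [Tn]
  rw [show ((0:ℝ)) ^ 2 / eDunkl ν (((m + 4 : ℕ) : ℝ) * x) = 0 by norm_num]
  simp only [add_zero]
  set E := eDunkl ν ((m + 4 : ℕ) * x) with hE
  have per : ∀ k : ℕ,
      (((m + 4 : ℕ) : ℝ) - 1) / E *
        ((Nat.choose (m + 4 + k - 1) k : ℝ) * (((m + 4 : ℕ) : ℝ) * x) ^ (k + 1) / dGamma ν (k + 1) *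
          ∫ s in Set.Ioi (0 : ℝ), s ^ k / (1 + s) ^ (m + 4 + k) * s ^ 2)
      = 1 / (((m + 4 : ℕ) : ℝ) ^ 2 - 5 * ((m + 4 : ℕ) : ℝ) + 6) *
          (1 / E * (((k : ℝ) + 1) * ((k : ℝ) + 2) * (((m + 4 : ℕ) : ℝ) * x) ^ (k + 1)
            / dGamma ν (k + 1))) := by
    intro k
    have hidx : m + 4 + k - 1 = m + k + 3 := by omega
    have hint : (∫ s in Set.Ioi (0 : ℝ), s ^ k / (1 + s) ^ (m + 4 + k) * s ^ 2)
        = (((k + 2).factorial : ℝ) * m.factorial) / ((m + k + 3).factorial : ℝ) := by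
      have hfun : (fun s : ℝ => s ^ k / (1 + s) ^ (m + 4 + k) * s ^ 2)
          = fun s : ℝ => s ^ (k + 2) / (1 + s) ^ ((k + 2) + m + 2) := by
        funext s
        rw [show (k + 2) + m + 2 = m + 4 + k by omega]
        ring
      rw [show (∫ s in Set.Ioi (0 : ℝ), s ^ k / (1 + s) ^ (m + 4 + k) * s ^ 2)
          = ∫ s in Set.Ioi (0 : ℝ), s ^ (k + 2) / (1 + s) ^ ((k + 2) + m + 2) from by rw [hfun],
        integral_closed m (k + 2), show (k + 2) + m + 1 = m + k + 3 by omega]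
    rw [hidx, hint]
    have hnat : (m + k + 3).choose k * k.factorial * (m + 3).factorial = (m + k + 3).factorial := by
      have h := Nat.choose_mul_factorial_mul_factorial (show k ≤ m + k + 3 by omega)
      rwa [show m + k + 3 - k = m + 3 by omega] at h
    have hch : ((m + k + 3).choose k : ℝ) * k.factorial * (m + 3).factorial
        = ((m + k + 3).factorial : ℝ) := by exact_mod_cast hnat
    have hm3 : ((m + 3).factorial : ℝ)
        = ((m : ℝ) + 3) * ((m : ℝ) + 2) * ((m : ℝ) + 1) * m.factorial := by
      have h : (m + 3).factorial = (m + 3) * ((m + 2) * ((m + 1) * m.factorial)) := by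
        rw [show m + 3 = (m + 2) + 1 from rfl, Nat.factorial_succ,
          show m + 2 = (m + 1) + 1 from rfl, Nat.factorial_succ, Nat.factorial_succ]
      rw [h]; push_cast; ring
    have hk2 : (((k + 2).factorial : ℝ))
        = ((k : ℝ) + 2) * ((k : ℝ) + 1) * k.factorial := by
      have h : (k + 2).factorial = (k + 2) * ((k + 1) * k.factorial) := by
        rw [show k + 2 = (k + 1) + 1 from rfl, Nat.factorial_succ, Nat.factorial_succ]
      rw [h]; push_cast; ring
    have hkf : ((k.factorial : ℝ)) ≠ 0 := by exact_mod_cast k.factorial_ne_zero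
    have hmf : ((m.factorial : ℝ)) ≠ 0 := by exact_mod_cast m.factorial_ne_zero
    have hmkf : (((m + k + 3).factorial : ℝ)) ≠ 0 := by
      exact_mod_cast (m + k + 3).factorial_ne_zero
    have hd0 : ((m : ℝ) + 4) ^ 2 - 5 * ((m : ℝ) + 4) + 6 ≠ 0 := by
      have h : ((m : ℝ) + 4) ^ 2 - 5 * ((m : ℝ) + 4) + 6 = ((m : ℝ) + 1) * ((m : ℝ) + 2) := by
        ring
      rw [h]; positivity
    have hC : ((m + k + 3).choose k : ℝ)
        = ((m + k + 3).factorial : ℝ) / (k.factorial * (m + 3).factorial) := by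
      have h3 : (((m + 3).factorial : ℝ)) ≠ 0 := by exact_mod_cast (m + 3).factorial_ne_zero
      rw [eq_div_iff (by exact mul_ne_zero hkf h3)]
      linear_combination hch
    have core : (((m : ℝ)) + 3) *
        (((m + k + 3).choose k : ℝ) * ((((k + 2).factorial : ℝ) * m.factorial)
          / ((m + k + 3).factorial : ℝ)))
        = 1 / (((m : ℝ) + 4) ^ 2 - 5 * ((m : ℝ) + 4) + 6) * (((k : ℝ) + 1) * ((k : ℝ) + 2)) := by
      rw [hC, hm3, hk2]
      rw [show ((m : ℝ) + 4) ^ 2 - 5 * ((m : ℝ) + 4) + 6 = ((m : ℝ) + 1) * ((m : ℝ) + 2) by ring]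
      field_simp
    push_cast
    linear_combination (E⁻¹ * ((((m : ℝ) + 4) * x) ^ (k + 1) / dGamma ν (k + 1))) * core
  calc (((m + 4 : ℕ) : ℝ) - 1) / E *
        ∑' k : ℕ, (Nat.choose (m + 4 + k - 1) k : ℝ) * (((m + 4 : ℕ) : ℝ) * x) ^ (k + 1)
          / dGamma ν (k + 1) *
          ∫ s in Set.Ioi (0 : ℝ), s ^ k / (1 + s) ^ (m + 4 + k) * s ^ 2
      = ∑' k : ℕ, (((m + 4 : ℕ) : ℝ) - 1) / E *
        ((Nat.choose (m + 4 + k - 1) k : ℝ) * (((m + 4 : ℕ) : ℝ) * x) ^ (k + 1)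
          / dGamma ν (k + 1) *
          ∫ s in Set.Ioi (0 : ℝ), s ^ k / (1 + s) ^ (m + 4 + k) * s ^ 2) := by
        rw [tsum_mul_left]
    _ = ∑' k : ℕ, 1 / (((m + 4 : ℕ) : ℝ) ^ 2 - 5 * ((m + 4 : ℕ) : ℝ) + 6) *
          (1 / E * (((k : ℝ) + 1) * ((k : ℝ) + 2) * (((m + 4 : ℕ) : ℝ) * x) ^ (k + 1)
            / dGamma ν (k + 1))) := tsum_congr per
    _ = 1 / (((m + 4 : ℕ) : ℝ) ^ 2 - 5 * ((m + 4 : ℕ) : ℝ) + 6) * (1 / E) *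
        ∑' r : ℕ, ((r : ℝ) + 1) * ((r : ℝ) + 2) * (((m + 4 : ℕ) : ℝ) * x) ^ (r + 1)
          / dGamma ν (r + 1) := by
        rw [tsum_mul_left, tsum_mul_left, ← mul_assoc]
end
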